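/- arXiv:2202.07154 — 3 statements merged into one kernel-verified Lean document; each statement's English description precedes it below -/
import Mathlib

section
/- Let $x \in L_1(0,1)$ with decreasing rearrangement $\mu(x)$, and define $f_1 = \sum_{n=0}^{\infty} (-1)^{n+1} \mu(2^{-n-1}; x)\, h_{n,1}$, where $h_{n,1} = \chi_{(0,2^{-n-1})} - \chi_{(2^{-n-1},2^{-n})}$. Then $|f_1(t)| \le 2\, (\sigma_2 \mu(x))(t)$ for almost every $t \in (0,1)$, where $(\sigma_2 y)(t) = y(t/2)\chi_{[0,1]}(t/2)$ is the dilation operator. -/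
open MeasureTheory Set
open scoped ENNReal NNReal

noncomputable section

def m01 : Measure ℝ := volume.restrict (Ioo (0:ℝ) 1)

def rearr (x : ℝ → ℝ) (t : ℝ) : ℝ :=
  sInf {s : ℝ | 0 ≤ s ∧ m01 {u | s < |x u|} ≤ ENNReal.ofReal t}

def dil (s : ℝ) (y : ℝ → ℝ) (t : ℝ) : ℝ :=
  if t / s ∈ Icc (0:ℝ) 1 then y (t / s) else 0

def In (n : ℕ) : Set ℝ := Ioo (((2:ℝ)^(n+1))⁻¹) (((2:ℝ)^n)⁻¹)

def Jn (n : ℕ) : Set ℝ := Ioo 0 (((2:ℝ)^n)⁻¹)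

def haarH (n : ℕ) : ℝ → ℝ := fun t => indicator (Jn (n+1)) 1 t - indicator (In n) 1 t

def Eset : Set ℝ := ⋃ j : ℕ, In (2*j)

def hardyC (y : ℝ → ℝ) (t : ℝ) : ℝ := (1/t) * ∫ s in Ioo (0:ℝ) t, y s

def hardyCstar (y : ℝ → ℝ) (t : ℝ) : ℝ := ∫ s in Ioo t 1, y s / s

def calderon (y : ℝ → ℝ) (t : ℝ) : ℝ := hardyC y t + hardyCstar y t

def dyadicSA (m : ℕ) : MeasurableSpace ℝ :=
  MeasurableSpace.generateFrom
    {A | ∃ j : ℕ, 1 ≤ j ∧ j ≤ 2^m ∧ A = Ioo ((j-1 : ℝ)/2^m) ((j:ℝ)/2^m)}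

def condE (m : ℕ) (f : ℝ → ℝ) : ℝ → ℝ := m01[f | dyadicSA m]

def condEprev (m : ℕ) (f : ℝ → ℝ) : ℝ → ℝ := if m = 0 then 0 else condE (m-1) f

def Tmart (f : ℝ → ℝ) : ℝ → ℝ :=
  fun t => ∑' m : ℕ, if Even m then condE m f t - condEprev m f t else 0

def Teps (f : ℝ → ℝ) : ℝ → ℝ :=
  fun t => ∑' m : ℕ, (-1:ℝ)^m * (condE m f t - condEprev m f t)

lemma rearr_nonneg (x : ℝ → ℝ) (t : ℝ) : 0 ≤ rearr x t :=
  Real.sInf_nonneg (fun s hs => hs.1)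

lemma rearr_set_nonempty (x : ℝ → ℝ) (hx : Integrable x m01) {t : ℝ} (ht : 0 < t) :
    {s : ℝ | 0 ≤ s ∧ m01 {u | s < |x u|} ≤ ENNReal.ofReal t}.Nonempty := by
  set L := ∫⁻ u, (‖x u‖₊ : ℝ≥0∞) ∂m01 with hLdef
  have hL : L ≠ ⊤ := hx.2.ne
  refine ⟨L.toReal / t + 1, ⟨by positivity, ?_⟩⟩
  set s := L.toReal / t + 1 with hs_def
  have hs : 0 < s := by positivity
  have hsub : {u | s < |x u|} ⊆ {u | ENNReal.ofReal s ≤ (‖x u‖₊ : ℝ≥0∞)} := by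
    intro u hu
    simp only [mem_setOf_eq] at hu ⊢
    rw [← enorm_eq_nnnorm, ← ofReal_norm]
    exact ENNReal.ofReal_le_ofReal (by simpa [Real.norm_eq_abs] using hu.le)
  calc m01 {u | s < |x u|} ≤ m01 {u | ENNReal.ofReal s ≤ (‖x u‖₊:ℝ≥0∞)} := measure_mono hsub
    _ ≤ L / ENNReal.ofReal s :=
        meas_ge_le_lintegral_div hx.1.enorm (by simp [ENNReal.ofReal_pos.mpr hs |>.ne']) ENNReal.ofReal_ne_top
    _ ≤ ENNReal.ofReal t := by
        rw [ENNReal.div_le_iff_le_mul (Or.inl (ENNReal.ofReal_pos.mpr hs).ne') (Or.inl ENNReal.ofReal_ne_top)]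
        rw [← ENNReal.ofReal_mul ht.le]
        have : t * s = L.toReal + t := by rw [hs_def, mul_add, mul_one, mul_div_cancel₀ _ ht.ne']
        rw [this]
        calc L = ENNReal.ofReal L.toReal := (ENNReal.ofReal_toReal hL).symm
          _ ≤ ENNReal.ofReal (L.toReal + t) := ENNReal.ofReal_le_ofReal (by linarith)

lemma rearr_anti (x : ℝ → ℝ) (hx : Integrable x m01) {t t' : ℝ} (ht : 0 < t) (h : t ≤ t') :
    rearr x t' ≤ rearr x t := by
  apply csInf_le_csInf ⟨0, fun s hs => hs.1⟩ (rearr_set_nonempty x hx ht)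
  intro s hs
  exact ⟨hs.1, hs.2.trans (ENNReal.ofReal_le_ofReal h)⟩

lemma alt_aux (a : ℕ → ℝ) (h0 : ∀ n, 0 ≤ a n) (hm : Monotone a) (m : ℕ) :
    0 ≤ (-1:ℝ)^m * ∑ n ∈ Finset.range m, (-1:ℝ)^(n+1) * a n ∧
      (-1:ℝ)^m * ∑ n ∈ Finset.range m, (-1:ℝ)^(n+1) * a n ≤ a m := by
  induction m with
  | zero => simp [h0 0]
  | succ m ih =>
    rw [Finset.sum_range_succ]
    have hXX : (-1:ℝ)^m * (-1)^m = 1 := by rw [← mul_pow]; norm_num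
    have key : (-1:ℝ)^(m+1) * (∑ n ∈ Finset.range m, (-1:ℝ)^(n+1) * a n + (-1:ℝ)^(m+1) * a m)
        = -((-1:ℝ)^m * ∑ n ∈ Finset.range m, (-1:ℝ)^(n+1) * a n) + a m := by
      rw [pow_succ]
      linear_combination (a m) * hXX
    rw [key]
    exact ⟨by linarith [ih.2], by linarith [ih.1, hm (Nat.le_succ m)]⟩

lemma two_pow_inv_le {a b : ℕ} (h : b ≤ a) : ((2:ℝ)^a)⁻¹ ≤ ((2:ℝ)^b)⁻¹ := by
  apply inv_anti₀ (by positivity)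
  exact pow_le_pow_right₀ one_le_two h

theorem f1_pointwise_bound (x : ℝ → ℝ) (hx : Integrable x m01) :
    ∀ᵐ t ∂m01,
      |∑' n : ℕ, (-1:ℝ)^(n+1) * rearr x (((2:ℝ)^(n+1))⁻¹) * haarH n t|
        ≤ 2 * dil 2 (rearr x) t := by
  have h1 : ∀ᵐ t ∂m01, t ∈ Ioo (0:ℝ) 1 := ae_restrict_mem measurableSet_Ioo
  have h2 : ∀ᵐ t ∂m01, t ∉ (Set.range fun k : ℕ => ((2:ℝ)^k)⁻¹) := by
    have hc : volume (Set.range fun k : ℕ => ((2:ℝ)^k)⁻¹) = 0 :=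
      (Set.countable_range _).measure_zero _
    have h0 : m01 (Set.range fun k : ℕ => ((2:ℝ)^k)⁻¹) = 0 :=
      le_antisymm (le_trans (Measure.le_iff'.1 Measure.restrict_le_self _) hc.le) zero_le
    exact measure_eq_zero_iff_ae_notMem.mp h0
  filter_upwards [h1, h2] with t ht hr
  -- find the dyadic level m
  have hex : ∃ n : ℕ, ((2:ℝ)^(n+1))⁻¹ < t := by
    obtain ⟨n, hn⟩ := exists_pow_lt_of_lt_one ht.1 (by norm_num : (1/2:ℝ) < 1)
    refine ⟨n, lt_of_le_of_lt ?_ hn⟩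
    have he : ((1:ℝ)/2)^n = ((2:ℝ)^n)⁻¹ := by rw [one_div, inv_pow]
    rw [he]
    exact two_pow_inv_le (Nat.le_succ n)
  set m := Nat.find hex with hm_def
  have hm1 : ((2:ℝ)^(m+1))⁻¹ < t := Nat.find_spec hex
  have hm2 : t < ((2:ℝ)^m)⁻¹ := by
    rcases Nat.eq_zero_or_pos m with h | h
    · rw [h]; simpa using ht.2
    · obtain ⟨k, hk⟩ := Nat.exists_eq_succ_of_ne_zero h.ne'
      have hmin : ¬ ((2:ℝ)^(k+1))⁻¹ < t := Nat.find_min hex (by omega)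
      have hne : t ≠ ((2:ℝ)^(k+1))⁻¹ := fun hc => hr ⟨k+1, hc.symm⟩
      push_neg at hmin
      rw [hk]
      exact lt_of_le_of_ne hmin hne
  set a : ℕ → ℝ := fun n => rearr x (((2:ℝ)^(n+1))⁻¹) with ha_def
  have ha0 : ∀ n, 0 ≤ a n := fun n => rearr_nonneg x _
  have hamono : Monotone a := by
    intro n n' h
    exact rearr_anti x hx (by positivity) (two_pow_inv_le (Nat.succ_le_succ h))
  -- evaluate the tsum
  have hsum : ∑' n : ℕ, (-1:ℝ)^(n+1) * rearr x (((2:ℝ)^(n+1))⁻¹) * haarH n t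
      = (∑ n ∈ Finset.range m, (-1:ℝ)^(n+1) * a n) + (-1:ℝ)^m * a m := by
    have hzero : ∀ n ∉ Finset.range (m+1),
        (-1:ℝ)^(n+1) * rearr x (((2:ℝ)^(n+1))⁻¹) * haarH n t = 0 := by
      intro n hn
      rw [Finset.mem_range, not_lt] at hn
      have hj : t ∉ Jn (n+1) := by
        intro hmem
        have hle : ((2:ℝ)^(n+1))⁻¹ ≤ ((2:ℝ)^(m+1))⁻¹ := two_pow_inv_le (by omega)
        exact absurd hmem.2 (not_lt.mpr (le_trans hle hm1.le))
      have hi : t ∉ In n := by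
        intro hmem
        have hle : ((2:ℝ)^n)⁻¹ ≤ ((2:ℝ)^(m+1))⁻¹ := two_pow_inv_le hn
        exact absurd hmem.2 (not_lt.mpr (le_trans hle hm1.le))
      simp [haarH, indicator_of_notMem hj, indicator_of_notMem hi]
    rw [tsum_eq_sum hzero, Finset.sum_range_succ]
    congr 1
    · apply Finset.sum_congr rfl
      intro n hn
      rw [Finset.mem_range] at hn
      have hj : t ∈ Jn (n+1) :=
        ⟨ht.1, lt_of_lt_of_le hm2 (two_pow_inv_le hn)⟩
      have hi : t ∉ In n := by
        intro hmem
        have hle : ((2:ℝ)^m)⁻¹ ≤ ((2:ℝ)^(n+1))⁻¹ := two_pow_inv_le (Nat.succ_le_of_lt hn)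
        exact absurd hmem.1 (not_lt.mpr (le_trans hm2.le hle))
      simp [haarH, indicator_of_mem hj, indicator_of_notMem hi, ha_def]
    · have hj : t ∉ Jn (m+1) := fun hmem => absurd hmem.2 (not_lt.mpr hm1.le)
      have hi : t ∈ In m := ⟨hm1, hm2⟩
      have hsign : (-1:ℝ)^(m+1) * rearr x (((2:ℝ)^(m+1))⁻¹) * (0 - 1) = (-1:ℝ)^m * a m := by
        rw [pow_succ, ha_def]
        ring
      simpa [haarH, indicator_of_notMem hj, indicator_of_mem hi] using hsign
  rw [hsum]
  -- evaluate the dilation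
  have hdil : dil 2 (rearr x) t = rearr x (t / 2) := by
    rw [dil, if_pos]
    constructor <;> [linarith [ht.1]; linarith [ht.2]]
  rw [hdil]
  have ham : a m ≤ rearr x (t / 2) := by
    apply rearr_anti x hx (by linarith [ht.1])
    have h2m : ((2:ℝ)^(m+1))⁻¹ = ((2:ℝ)^m)⁻¹ / 2 := by
      rw [pow_succ]
      field_simp
    rw [h2m]
    linarith
  -- the alternating-sum bound
  obtain ⟨hb1, hb2⟩ := alt_aux a ha0 hamono m
  set B := ∑ n ∈ Finset.range m, (-1:ℝ)^(n+1) * a n with hB_def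
  have hXX : (-1:ℝ)^m * (-1)^m = 1 := by rw [← mul_pow]; norm_num
  have hrw : B + (-1:ℝ)^m * a m = (-1:ℝ)^m * ((-1:ℝ)^m * B + a m) := by
    linear_combination (-B) * hXX
  rw [hrw, abs_mul, abs_pow, abs_neg, abs_one, one_pow, one_mul]
  rw [abs_le]
  constructor
  · nlinarith [ha0 m]
  · nlinarith [ha0 m]
end
end

section
/- Let $T_\epsilon f = \sum_{m \ge 0} (-1)^m (\mathbb{E}_m f - \mathbb{E}_{m-1} f)$ with $\mathbb{E}_{-1} = 0$, where $\mathbb{E}_m$ is the dyadic conditional expectation. Then for every even $n \ge 0$, $T_\epsilon \chi_{I_n} + \chi_{I_n} = 2^{-n} \sum_{k=0}^{n-1} \chi_{I_k} \cdot \frac{(-1)^k 2^{k+1} + 1}{3} + 2^{-n} \sum_{k=n}^{\infty} \chi_{I_k} \cdot \frac{2^{n+1}+1}{3}$, where $I_k = (2^{-k-1},2^{-k})$. -/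
open MeasureTheory Set

noncomputable section

abbrev dgen (m : ℕ) : Set (Set ℝ) :=
  {A | ∃ j : ℕ, 1 ≤ j ∧ j ≤ 2^m ∧ A = Ioo ((j-1 : ℝ)/2^m) ((j:ℝ)/2^m)}

lemma dy_le (m : ℕ) : dyadicSA m ≤ Real.measurableSpace := by
  apply MeasurableSpace.generateFrom_le
  rintro A ⟨j, _, _, rfl⟩
  exact measurableSet_Ioo

instance : IsProbabilityMeasure m01 := by
  constructor
  simp [m01, Real.volume_Ioo]


lemma piSys (m : ℕ) : IsPiSystem (dgen m) := by
  rintro A ⟨j, hj1, hj2, rfl⟩ B ⟨i, hi1, hi2, rfl⟩ hne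
  rcases eq_or_ne j i with rfl | hji
  · simpa using ⟨j, hj1, hj2, by simp⟩
  · exfalso
    rcases hne with ⟨x, hxA, hxB⟩
    simp only [mem_Ioo] at hxA hxB
    have h2 : (0:ℝ) < 2^m := by positivity
    have key : ∀ a b : ℕ, a < b → ∀ x : ℝ, x < (a:ℝ)/2^m → ((b:ℝ)-1)/2^m < x → False := by
      intro a b hab x hx1 hx2
      have hab' : (a:ℝ) ≤ (b:ℝ) - 1 := by
        have : (a:ℝ) + 1 ≤ b := by exact_mod_cast hab
        linarith
      have : (a:ℝ)/2^m ≤ ((b:ℝ)-1)/2^m := by gcongr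
      linarith
    rcases lt_or_gt_of_ne hji with h | h
    · exact key j i h x hxA.2 hxB.1
    · exact key i j h x hxB.2 hxA.1

lemma setIntegral_eq_on_dyadic (m : ℕ) {f g : ℝ → ℝ} (hf : Integrable f m01)
    (hg : Integrable g m01) (huniv : ∫ x, f x ∂m01 = ∫ x, g x ∂m01)
    (hgen : ∀ A ∈ dgen m, ∫ x in A, f x ∂m01 = ∫ x in A, g x ∂m01) :
    ∀ s, MeasurableSet[dyadicSA m] s → ∫ x in s, f x ∂m01 = ∫ x in s, g x ∂m01 := by
  have H := @MeasurableSpace.induction_on_inter ℝ (dyadicSA m)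
    (fun s _ => ∫ x in s, f x ∂m01 = ∫ x in s, g x ∂m01) (dgen m)
    rfl (piSys m) (by simp) hgen ?_ ?_
  · exact fun s hs => H s hs
  · intro t ht hC
    have ht' : MeasurableSet t := dy_le m t ht
    have h1 := integral_add_compl ht' hf
    have h2 := integral_add_compl ht' hg
    rw [huniv] at h1
    linarith [h1, h2, hC]
  · intro s hd hmeas hC
    have hmeas' : ∀ i, MeasurableSet (s i) := fun i => dy_le m _ (hmeas i)
    rw [integral_iUnion hmeas' hd hf.integrableOn,
      integral_iUnion hmeas' hd hg.integrableOn]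
    exact tsum_congr hC

lemma m01_Ioo {a b : ℝ} (ha : 0 ≤ a) (hb : b ≤ 1) :
    m01 (Ioo a b) = ENNReal.ofReal (b - a) := by
  rw [m01, Measure.restrict_apply measurableSet_Ioo, Ioo_inter_Ioo,
    max_eq_left ha, min_eq_left hb, Real.volume_Ioo]

lemma int_ind_m01 (s A : Set ℝ) (hA : MeasurableSet A) :
    ∫ x in s, indicator A (1 : ℝ → ℝ) x ∂m01 = (m01 (s ∩ A)).toReal := by
  rw [setIntegral_indicator hA]
  simp
  rfl

lemma integrable_ind (A : Set ℝ) (hA : MeasurableSet A) :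
    Integrable (indicator A (1 : ℝ → ℝ)) m01 :=
  (integrable_const (1:ℝ)).indicator hA

lemma In_subset (n : ℕ) : In n ⊆ Ioo 0 1 := by
  intro x hx
  simp only [In, mem_Ioo] at hx ⊢
  constructor
  · have : (0:ℝ) < ((2:ℝ)^(n+1))⁻¹ := by positivity
    linarith
  · have : ((2:ℝ)^n)⁻¹ ≤ 1 := by
      rw [inv_le_one_iff₀]
      right
      exact one_le_pow₀ one_le_two
    linarith

lemma half_id (n : ℕ) : ((2:ℝ)^n)⁻¹ - ((2:ℝ)^(n+1))⁻¹ = ((2:ℝ)^(n+1))⁻¹ := by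
  rw [pow_succ]
  have h : (2:ℝ)^n ≠ 0 := by positivity
  field_simp
  try norm_num

lemma Jn_mem_dgen (m : ℕ) : Jn m ∈ dgen m :=
  ⟨1, le_refl 1, Nat.one_le_two_pow, by norm_num [Jn, one_div]⟩

lemma m01_In (n : ℕ) : (m01 (In n)).toReal = ((2:ℝ)^(n+1))⁻¹ := by
  rw [In, m01_Ioo (by positivity)
    (by rw [inv_le_one_iff₀]; right; exact one_le_pow₀ one_le_two),
    half_id, ENNReal.toReal_ofReal (by positivity)]

lemma m01_Jn (m : ℕ) : (m01 (Jn m)).toReal = ((2:ℝ)^m)⁻¹ := by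
  rw [Jn, m01_Ioo le_rfl
    (by rw [inv_le_one_iff₀]; right; exact one_le_pow₀ one_le_two),
    sub_zero, ENNReal.toReal_ofReal (by positivity)]

lemma In_subset_Jn {m n : ℕ} (hm : m ≤ n) : In n ⊆ Jn m := by
  intro x hx
  simp only [In, Jn, mem_Ioo] at hx ⊢
  refine ⟨lt_trans (by positivity) hx.1, lt_of_lt_of_le hx.2 ?_⟩
  gcongr <;> norm_num

lemma condE_le {n m : ℕ} (hm : m ≤ n) :
    condE m (indicator (In n) 1) =ᵐ[m01]
      fun t => (2:ℝ)^m * ((2:ℝ)^(n+1))⁻¹ * indicator (Jn m) 1 t := by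
  set c : ℝ := (2:ℝ)^m * ((2:ℝ)^(n+1))⁻¹ with hc
  set g : ℝ → ℝ := fun t => c * indicator (Jn m) 1 t with hg
  have hJmeas : MeasurableSet (Jn m) := measurableSet_Ioo
  have hImeas : MeasurableSet (In n) := measurableSet_Ioo
  have hf : Integrable (indicator (In n) (1:ℝ→ℝ)) m01 := integrable_ind _ hImeas
  have hgint : Integrable g m01 := (integrable_ind _ hJmeas).const_mul c
  have intg : ∀ s : Set ℝ, ∫ x in s, g x ∂m01 = c * (m01 (s ∩ Jn m)).toReal := by
    intro s
    rw [hg]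
    rw [integral_const_mul, int_ind_m01 _ _ hJmeas]
  have intf : ∀ s : Set ℝ, ∫ x in s, indicator (In n) (1:ℝ→ℝ) x ∂m01
      = (m01 (s ∩ In n)).toReal := fun s => int_ind_m01 _ _ hImeas
  have hcval : c * ((2:ℝ)^m)⁻¹ = ((2:ℝ)^(n+1))⁻¹ := by
    rw [hc]
    have h : (2:ℝ)^m ≠ 0 := by positivity
    field_simp
    try ring
  have huniv : ∫ x, g x ∂m01 = ∫ x, indicator (In n) (1:ℝ→ℝ) x ∂m01 := by
    rw [← setIntegral_univ (f := g), ← setIntegral_univ (μ := m01)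
      (f := indicator (In n) (1:ℝ→ℝ)), intg, intf, univ_inter, univ_inter,
      m01_Jn, m01_In, hcval]
  have hgen : ∀ A ∈ dgen m, ∫ x in A, g x ∂m01
      = ∫ x in A, indicator (In n) (1:ℝ→ℝ) x ∂m01 := by
    rintro A ⟨j, hj1, hj2, rfl⟩
    rw [intg, intf]
    rcases eq_or_lt_of_le hj1 with rfl | hj
    · have hA : Ioo ((((1:ℕ):ℝ)-1)/2^m) (((1:ℕ):ℝ)/2^m) = Jn m := by
        norm_num [Jn, one_div]
      rw [hA, inter_eq_self_of_subset_right (In_subset_Jn hm), inter_self,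
        m01_Jn, m01_In, hcval]
    · -- j ≥ 2
      have h2j : (2:ℝ) ≤ (j:ℝ) := by exact_mod_cast hj
      have hpos : (0:ℝ) < 2^m := by positivity
      have hemp1 : Ioo (((j:ℝ)-1)/2^m) ((j:ℝ)/2^m) ∩ Jn m = ∅ := by
        ext x
        simp only [Jn, mem_inter_iff, mem_Ioo, mem_empty_iff_false, iff_false, not_and]
        intro h1 hx0 hx
        have : ((2:ℝ)^m)⁻¹ ≤ ((j:ℝ)-1)/2^m := by
          rw [inv_eq_one_div]
          gcongr
          linarith
        linarith [h1.1]
      have hemp2 : Ioo (((j:ℝ)-1)/2^m) ((j:ℝ)/2^m) ∩ In n = ∅ := by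
        ext x
        simp only [In, mem_inter_iff, mem_Ioo, mem_empty_iff_false, iff_false, not_and]
        intro h1 hx0 hx
        have h5 : ((2:ℝ)^m)⁻¹ ≤ ((j:ℝ)-1)/2^m := by
          rw [inv_eq_one_div]
          gcongr
          linarith
        have h6 : ((2:ℝ)^n)⁻¹ ≤ ((2:ℝ)^m)⁻¹ := by
          gcongr <;> norm_num
        linarith [h1.1]
      rw [hemp1, hemp2]
      simp
  have hgm : AEStronglyMeasurable[dyadicSA m] g m01 := by
    refine ⟨g, ?_, Filter.EventuallyEq.rfl⟩
    exact ((@stronglyMeasurable_const ℝ ℝ (dyadicSA m) _ 1).indicator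
      (MeasurableSpace.measurableSet_generateFrom (Jn_mem_dgen m))).const_mul c
  exact (ae_eq_condExp_of_forall_setIntegral_eq (dy_le m) hf
    (fun s _ _ => hgint.integrableOn)
    (fun s hs _ => setIntegral_eq_on_dyadic m hgint hf huniv hgen s hs) hgm).symm

lemma condE_ge {n m : ℕ} (hm : n + 1 ≤ m) :
    condE m (indicator (In n) 1) =ᵐ[m01] indicator (In n) 1 := by
  have hsplit : (2:ℝ)^m = 2^(m-n-1) * 2^(n+1) := by
    rw [← pow_add]
    congr 1
    omega
  have hpow : (0:ℝ) < 2^m := by positivity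
  set U : Set ℝ := ⋃ j ∈ Finset.Ioc ((2:ℕ)^(m-n-1)) ((2:ℕ)^(m-n)),
    Ioo (((j:ℝ)-1)/(2:ℝ)^m) ((j:ℝ)/(2:ℝ)^m) with hU
  have hUsub : U ⊆ In n := by
    intro x hx
    simp only [hU, mem_iUnion, mem_Ioo, exists_prop] at hx
    obtain ⟨j, hjmem, hx1, hx2⟩ := hx
    rw [Finset.mem_Ioc] at hjmem
    obtain ⟨hj1, hj2⟩ := hjmem
    have hj1' : (2:ℝ)^(m-n-1) + 1 ≤ (j:ℝ) := by
      have h : (2:ℕ)^(m-n-1) + 1 ≤ j := hj1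
      exact_mod_cast h
    have hj2' : (j:ℝ) ≤ (2:ℝ)^(m-n) := by exact_mod_cast hj2
    have hsplit2 : (2:ℝ)^m = 2^(m-n) * 2^n := by
      rw [← pow_add]
      congr 1
      omega
    constructor
    · have h1 : ((2:ℝ)^(n+1))⁻¹ ≤ ((j:ℝ)-1)/2^m := by
        rw [hsplit, inv_eq_one_div, div_le_div_iff₀ (by positivity) (by positivity)]
        have hp : (0:ℝ) < 2^(n+1) := by positivity
        nlinarith [hj1', hp]
      linarith
    · have h2 : (j:ℝ)/2^m ≤ ((2:ℝ)^n)⁻¹ := by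
        rw [hsplit2, inv_eq_one_div, div_le_div_iff₀ (by positivity) (by positivity)]
        have hp : (0:ℝ) < 2^n := by positivity
        nlinarith [hj2', hp]
      linarith
  have hUmeas : MeasurableSet[dyadicSA m] U := by
    refine Finset.measurableSet_biUnion _ ?_
    intro j hj
    simp only [Finset.mem_Ioc] at hj
    refine MeasurableSpace.measurableSet_generateFrom ⟨j, ?_, ?_, rfl⟩
    · have := Nat.one_le_two_pow (n := m - n - 1)
      omega
    · calc j ≤ 2^(m-n) := hj.2
        _ ≤ 2^m := Nat.pow_le_pow_right (by norm_num) (by omega)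
  have hdisj : (↑(Finset.Ioc ((2:ℕ)^(m-n-1)) ((2:ℕ)^(m-n))) : Set ℕ).Pairwise
      (Function.onFun Disjoint fun j : ℕ => Ioo (((j:ℝ)-1)/(2:ℝ)^m) ((j:ℝ)/(2:ℝ)^m)) := by
    have key : ∀ i j : ℕ, i < j →
        Disjoint (Ioo (((i:ℝ)-1)/(2:ℝ)^m) ((i:ℝ)/(2:ℝ)^m))
          (Ioo (((j:ℝ)-1)/(2:ℝ)^m) ((j:ℝ)/(2:ℝ)^m)) := by
      intro i j hij
      rw [Set.Ioo_disjoint_Ioo]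
      have : (i:ℝ) ≤ (j:ℝ) - 1 := by
        have : (i:ℝ) + 1 ≤ (j:ℝ) := by exact_mod_cast hij
        linarith
      calc min ((i:ℝ)/2^m) ((j:ℝ)/2^m) ≤ (i:ℝ)/2^m := min_le_left _ _
        _ ≤ ((j:ℝ)-1)/2^m := by gcongr
        _ ≤ max (((i:ℝ)-1)/2^m) (((j:ℝ)-1)/2^m) := le_max_right _ _
    intro i _ j _ hij
    rcases lt_or_gt_of_ne hij with h | h
    · exact key i j h
    · exact (key j i h).symm
  have hmeasU : m01 U = m01 (In n) := by
    rw [hU, measure_biUnion_finset hdisj (fun j _ => measurableSet_Ioo)]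
    have heach : ∀ j ∈ Finset.Ioc ((2:ℕ)^(m-n-1)) ((2:ℕ)^(m-n)),
        m01 (Ioo (((j:ℝ)-1)/(2:ℝ)^m) ((j:ℝ)/(2:ℝ)^m))
          = ENNReal.ofReal (((2:ℝ)^m)⁻¹) := by
      intro j hj
      simp only [Finset.mem_Ioc] at hj
      have hj1 : 1 ≤ j := by
        have := Nat.one_le_two_pow (n := m - n - 1)
        omega
      have hj2 : j ≤ 2^m := le_trans hj.2 (Nat.pow_le_pow_right (by norm_num) (by omega))
      have hj1' : (1:ℝ) ≤ (j:ℝ) := by exact_mod_cast hj1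
      have hj2' : (j:ℝ) ≤ (2:ℝ)^m := by exact_mod_cast (by exact_mod_cast hj2 : (j:ℝ) ≤ ((2^m : ℕ):ℝ))
      rw [m01_Ioo (div_nonneg (by linarith) hpow.le) (by rw [div_le_one hpow]; exact hj2')]
      congr 1
      field_simp
      ring
    rw [Finset.sum_congr rfl heach, Finset.sum_const, Nat.card_Ioc]
    have hcard : 2^(m-n) - 2^(m-n-1) = 2^(m-n-1) := by
      obtain ⟨k, hk⟩ : ∃ k, m - n = k + 1 := ⟨m-n-1, by omega⟩
      have hk' : m - n - 1 = k := by omega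
      rw [hk]
      simp only [Nat.add_sub_cancel, pow_succ]
      omega
    rw [hcard, In, m01_Ioo (by positivity)
        (by rw [inv_le_one_iff₀]; right; exact one_le_pow₀ one_le_two), half_id,
      nsmul_eq_mul]
    rw [show ((2^(m-n-1) : ℕ) : ENNReal) = ENNReal.ofReal ((2:ℝ)^(m-n-1)) by
      rw [ENNReal.ofReal_pow (by norm_num)]
      push_cast
      norm_num]
    rw [← ENNReal.ofReal_mul (by positivity)]
    congr 1
    rw [hsplit]
    have h1 : (2:ℝ)^(m-n-1) ≠ 0 := by positivity
    have h2 : (2:ℝ)^(n+1) ≠ 0 := by positivity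
    field_simp
  have haeset : U =ᵐ[m01] In n :=
    ae_eq_of_subset_of_measure_ge hUsub (le_of_eq hmeasU.symm)
      (Finset.measurableSet_biUnion _ fun j _ => measurableSet_Ioo).nullMeasurableSet
      (measure_ne_top _ _)
  have hae : indicator (In n) (1:ℝ→ℝ) =ᵐ[m01] indicator U (1:ℝ→ℝ) :=
    indicator_ae_eq_of_ae_eq_set haeset.symm
  have hsmU : StronglyMeasurable[dyadicSA m] (indicator U (1:ℝ→ℝ)) :=
    StronglyMeasurable.indicator stronglyMeasurable_one hUmeas
  have hsm : AEStronglyMeasurable[dyadicSA m] (indicator (In n) (1:ℝ→ℝ)) m01 :=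
    ⟨indicator U (1:ℝ→ℝ), hsmU, hae⟩
  exact condExp_of_aestronglyMeasurable' (dy_le m) hsm (integrable_ind _ measurableSet_Ioo)

lemma ae_mem_In : ∀ᵐ t ∂m01, ∃ k : ℕ, t ∈ In k := by
  rw [m01, ae_restrict_iff' measurableSet_Ioo]
  have hsub : {t : ℝ | ¬ (t ∈ Ioo (0:ℝ) 1 → ∃ k : ℕ, t ∈ In k)} ⊆
      Set.range (fun k : ℕ => ((2:ℝ)^(k+1))⁻¹) := by
    intro t ht
    rw [mem_setOf_eq, _root_.not_imp] at ht
    obtain ⟨hmem, hnk⟩ := ht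
    obtain ⟨ht0, ht1⟩ := hmem
    push_neg at hnk
    have hP : ∃ N : ℕ, ((2:ℝ)^N)⁻¹ ≤ t := by
      obtain ⟨N, hN⟩ := exists_nat_gt (1/t)
      refine ⟨N, ?_⟩
      have h2N : (N:ℝ) < 2^N := by exact_mod_cast (Nat.lt_two_pow_self (n := N))
      have : 1/t < (2:ℝ)^N := lt_trans hN h2N
      rw [inv_le_iff_one_le_mul₀ (by positivity)]
      rw [div_lt_iff₀ ht0] at this
      nlinarith
    classical
    set k0 := Nat.find hP with hk0
    have hk0P : ((2:ℝ)^k0)⁻¹ ≤ t := Nat.find_spec hP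
    have hk0ne : k0 ≠ 0 := by
      intro h
      rw [h] at hk0P
      simp at hk0P
      linarith
    obtain ⟨k, hk⟩ : ∃ k, k0 = k + 1 := ⟨k0 - 1, by omega⟩
    have hklt : t < ((2:ℝ)^k)⁻¹ := by
      by_contra h
      push_neg at h
      exact Nat.find_min hP (by omega) h
    have hnotin := hnk k
    rw [In, mem_Ioo, not_and_or] at hnotin
    rcases hnotin with h | h
    · push_neg at h
      have : t = ((2:ℝ)^(k+1))⁻¹ := le_antisymm h (by rw [← hk]; exact hk0P)
      exact ⟨k, this.symm⟩
    · exact absurd hklt h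
  exact measure_mono_null hsub ((Set.countable_range _).measure_zero _)

lemma inv_pow_mono {a b : ℕ} (h : a ≤ b) : ((2:ℝ)^b)⁻¹ ≤ ((2:ℝ)^a)⁻¹ := by
  gcongr <;> norm_num

lemma ind_Jn_at {k m : ℕ} {t : ℝ} (ht : t ∈ In k) :
    indicator (Jn m) (1:ℝ→ℝ) t = if m ≤ k then 1 else 0 := by
  obtain ⟨h1, h2⟩ := ht
  split_ifs with h
  · have hmem : t ∈ Jn m := by
      rw [Jn, mem_Ioo]
      have : (0:ℝ) < ((2:ℝ)^(k+1))⁻¹ := by positivity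
      exact ⟨by linarith, lt_of_lt_of_le h2 (inv_pow_mono h)⟩
    rw [indicator_of_mem hmem]
    rfl
  · rw [indicator_of_notMem]
    push_neg at h
    rw [Jn, mem_Ioo]
    push_neg
    intro _
    exact le_trans (inv_pow_mono h) h1.le

lemma ind_In_at {k j : ℕ} {t : ℝ} (ht : t ∈ In k) :
    indicator (In j) (1:ℝ→ℝ) t = if j = k then 1 else 0 := by
  obtain ⟨h1, h2⟩ := ht
  split_ifs with h
  · subst h
    rw [indicator_of_mem (show t ∈ In j from ⟨h1, h2⟩)]
    rfl
  · rw [indicator_of_notMem]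
    rw [In, mem_Ioo]
    push_neg
    intro hj
    rcases lt_or_gt_of_ne h with hlt | hgt
    · exfalso
      have hh : ((2:ℝ)^k)⁻¹ ≤ ((2:ℝ)^(j+1))⁻¹ := inv_pow_mono (by omega)
      linarith
    · exact le_trans (inv_pow_mono (by omega)) h1.le

lemma scalar_key (n k : ℕ) (hn : Even n) :
    (∑ m ∈ Finset.range (n+2), (-1:ℝ)^m *
        ((if m ≤ n then (2:ℝ)^m * ((2:ℝ)^(n+1))⁻¹ * (if m ≤ k then 1 else 0)
          else (if n = k then (1:ℝ) else 0))
         - (if m = 0 then 0 else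
            (if m - 1 ≤ n then (2:ℝ)^(m-1) * ((2:ℝ)^(n+1))⁻¹ * (if m - 1 ≤ k then 1 else 0)
             else (if n = k then (1:ℝ) else 0)))))
      + (if n = k then (1:ℝ) else 0)
    = (2:ℝ)^(-(n:ℤ)) * (if k ∈ Finset.range n then (((-1:ℝ)^k * 2^(k+1) + 1)/3) else 0)
      + (2:ℝ)^(-(n:ℤ)) * (if n ≤ k then (((2:ℝ)^(n+1) + 1)/3) else 0) := by
  set A : ℕ → ℝ := fun m => if m ≤ n then (2:ℝ)^m * ((2:ℝ)^(n+1))⁻¹ * (if m ≤ k then 1 else 0)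
      else (if n = k then (1:ℝ) else 0) with hA
  set B : ℕ → ℝ := fun m => if m = 0 then 0 else A (m-1) with hB
  have hzp : (2:ℝ)^(-(n:ℤ)) = ((2:ℝ)^n)⁻¹ := by
    rw [zpow_neg, zpow_natCast]
  have hsplit : ∑ m ∈ Finset.range (n+2), (-1:ℝ)^m * (A m - B m)
      = ∑ m ∈ Finset.range (n+2), (-1:ℝ)^m * A m
        - ∑ m ∈ Finset.range (n+2), (-1:ℝ)^m * B m := by
    rw [← Finset.sum_sub_distrib]
    exact Finset.sum_congr rfl fun m _ => by ring
  have hBsum : ∑ m ∈ Finset.range (n+2), (-1:ℝ)^m * B m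
      = - ∑ m ∈ Finset.range (n+1), (-1:ℝ)^m * A m := by
    rw [Finset.sum_range_succ' (fun m => (-1:ℝ)^m * B m) (n+1)]
    simp only [hB, pow_zero, one_mul, if_pos rfl, add_zero]
    rw [← Finset.sum_neg_distrib]
    refine Finset.sum_congr rfl fun i _ => ?_
    have : (i + 1) - 1 = i := by omega
    simp only [Nat.succ_ne_zero, if_false, this, pow_succ]
    ring
  have hAtop : A (n+1) = (if n = k then (1:ℝ) else 0) := by
    rw [hA]
    simp [Nat.not_succ_le_self]
  show (∑ m ∈ Finset.range (n+2), (-1:ℝ)^m * (A m - B m)) + (if n = k then (1:ℝ) else 0)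
    = (2:ℝ)^(-(n:ℤ)) * (if k ∈ Finset.range n then (((-1:ℝ)^k * 2^(k+1) + 1)/3) else 0)
      + (2:ℝ)^(-(n:ℤ)) * (if n ≤ k then (((2:ℝ)^(n+1) + 1)/3) else 0)
  rw [hsplit, hBsum, Finset.sum_range_succ (fun m => (-1:ℝ)^m * A m) (n+1), hAtop,
    (hn.add_one).neg_one_pow]
  have h2S : ∀ x S : ℝ, (S + (-1)*x - (-S)) + x = 2*S := by intros; ring
  rw [h2S]
  have hS2 : ∑ m ∈ Finset.range (n+1), (-1:ℝ)^m * A m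
      = ((2:ℝ)^(n+1))⁻¹ * ∑ m ∈ Finset.range (n+1), ((-2:ℝ)^m * (if m ≤ k then 1 else 0)) := by
    rw [Finset.mul_sum]
    refine Finset.sum_congr rfl fun m hm => ?_
    rw [Finset.mem_range] at hm
    rw [hA]
    simp only [if_pos (by omega : m ≤ n)]
    rw [show ((-2:ℝ))^m = (-1)^m * 2^m from by rw [neg_pow]]
    ring
  rw [hS2, hzp]
  by_cases hk : n ≤ k
  · have hsum1 : ∑ m ∈ Finset.range (n+1), ((-2:ℝ)^m * (if m ≤ k then 1 else 0))
        = ∑ m ∈ Finset.range (n+1), (-2:ℝ)^m := by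
      refine Finset.sum_congr rfl fun m hm => ?_
      rw [Finset.mem_range] at hm
      rw [if_pos (by omega : m ≤ k), mul_one]
    rw [hsum1, geom_sum_eq (by norm_num) (n+1), Odd.neg_pow (hn.add_one) 2,
      if_neg (by rw [Finset.mem_range]; omega), if_pos hk]
    rw [pow_succ]
    have hp : (2:ℝ)^n ≠ 0 := by positivity
    field_simp
    ring
  · have hsum1 : ∑ m ∈ Finset.range (n+1), ((-2:ℝ)^m * (if m ≤ k then 1 else 0))
        = ∑ m ∈ Finset.range (k+1), (-2:ℝ)^m := by
      rw [← Finset.sum_subset (Finset.range_subset_range.mpr (by omega : k+1 ≤ n+1))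
        (fun x hx hnx => ?_)]
      · refine Finset.sum_congr rfl fun m hm => ?_
        rw [Finset.mem_range] at hm
        rw [if_pos (by omega : m ≤ k), mul_one]
      · rw [Finset.mem_range] at hx hnx
        rw [if_neg (by omega : ¬ x ≤ k), mul_zero]
    rw [hsum1, geom_sum_eq (by norm_num) (k+1),
      show ((-2:ℝ))^(k+1) = -((-1)^k * 2^(k+1)) from by rw [neg_pow, pow_succ]; ring,
      if_pos (by rw [Finset.mem_range]; omega), if_neg hk]
    rw [pow_succ]
    have hp : (2:ℝ)^n ≠ 0 := by positivity
    field_simp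
    ring

theorem Teps_indicator_formula (n : ℕ) (hn : Even n) :
    (fun t => Teps (indicator (In n) 1) t + indicator (In n) 1 t) =ᵐ[m01]
      fun t => (2:ℝ)^(-(n:ℤ)) *
          (∑ k ∈ Finset.range n, indicator (In k) 1 t * (((-1:ℝ)^k * 2^(k+1) + 1)/3))
        + (2:ℝ)^(-(n:ℤ)) *
          (∑' k : ℕ, if n ≤ k then indicator (In k) 1 t * (((2:ℝ)^(n+1) + 1)/3) else 0) := by
  have hae1 : ∀ᵐ t ∂m01, ∀ m : ℕ, condE m (indicator (In n) 1) t =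
      (if m ≤ n then (2:ℝ)^m * ((2:ℝ)^(n+1))⁻¹ * indicator (Jn m) 1 t
       else indicator (In n) 1 t) := by
    rw [ae_all_iff]
    intro m
    by_cases hm : m ≤ n
    · filter_upwards [condE_le hm] with t ht
      rw [if_pos hm, ht]
    · filter_upwards [condE_ge (by omega : n+1 ≤ m)] with t ht
      rw [if_neg hm, ht]
  filter_upwards [hae1, ae_mem_In] with t hG hkex
  obtain ⟨k, hk⟩ := hkex
  have hJ : ∀ m : ℕ, indicator (Jn m) (1:ℝ→ℝ) t = if m ≤ k then 1 else 0 :=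
    fun m => ind_Jn_at hk
  have hI : ∀ j : ℕ, indicator (In j) (1:ℝ→ℝ) t = if j = k then 1 else 0 :=
    fun j => ind_In_at hk
  have hA : ∀ m : ℕ, condE m (indicator (In n) 1) t
      = (if m ≤ n then (2:ℝ)^m * ((2:ℝ)^(n+1))⁻¹ * (if m ≤ k then 1 else 0)
         else (if n = k then (1:ℝ) else 0)) := by
    intro m
    rw [hG m]
    by_cases hm : m ≤ n
    · rw [if_pos hm, if_pos hm, hJ m]
    · rw [if_neg hm, if_neg hm, hI n]
  have hprev : ∀ m : ℕ, condEprev m (indicator (In n) 1) t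
      = (if m = 0 then 0 else
          (if m - 1 ≤ n then (2:ℝ)^(m-1) * ((2:ℝ)^(n+1))⁻¹ * (if m - 1 ≤ k then 1 else 0)
           else (if n = k then (1:ℝ) else 0))) := by
    intro m
    by_cases hm : m = 0
    · simp [condEprev, hm]
    · rw [if_neg hm]
      rw [show condEprev m (indicator (In n) 1) = condE (m-1) (indicator (In n) 1) from by
        rw [condEprev, if_neg hm]]
      exact hA (m-1)
  have hvan : ∀ m ∉ Finset.range (n+2),
      (-1:ℝ)^m * (condE m (indicator (In n) 1) t - condEprev m (indicator (In n) 1) t) = 0 := by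
    intro m hm
    rw [Finset.mem_range, not_lt] at hm
    rw [hA m, hprev m, if_neg (by omega : ¬ m ≤ n), if_neg (by omega : m ≠ 0),
      if_neg (by omega : ¬ m - 1 ≤ n), sub_self, mul_zero]
  have hL : Teps (indicator (In n) 1) t = ∑ m ∈ Finset.range (n+2), (-1:ℝ)^m *
      ((if m ≤ n then (2:ℝ)^m * ((2:ℝ)^(n+1))⁻¹ * (if m ≤ k then 1 else 0)
        else (if n = k then (1:ℝ) else 0))
       - (if m = 0 then 0 else
          (if m - 1 ≤ n then (2:ℝ)^(m-1) * ((2:ℝ)^(n+1))⁻¹ * (if m - 1 ≤ k then 1 else 0)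
           else (if n = k then (1:ℝ) else 0)))) := by
    rw [Teps, tsum_eq_sum hvan]
    exact Finset.sum_congr rfl fun m _ => by rw [hA m, hprev m]
  have hfin : ∑ j ∈ Finset.range n, indicator (In j) (1:ℝ→ℝ) t * (((-1:ℝ)^j * 2^(j+1) + 1)/3)
      = if k ∈ Finset.range n then (((-1:ℝ)^k * 2^(k+1) + 1)/3) else 0 := by
    rw [show ∀ s : Finset ℕ, ∑ j ∈ s, indicator (In j) (1:ℝ→ℝ) t * (((-1:ℝ)^j * 2^(j+1) + 1)/3)
        = ∑ j ∈ s, if j = k then (((-1:ℝ)^j * 2^(j+1) + 1)/3) else 0 from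
      fun s => Finset.sum_congr rfl fun j _ => by rw [hI j, ite_mul, one_mul, zero_mul]]
    exact Finset.sum_ite_eq' _ _ _
  have htsum : (∑' j : ℕ, if n ≤ j then indicator (In j) (1:ℝ→ℝ) t * (((2:ℝ)^(n+1) + 1)/3) else 0)
      = if n ≤ k then (((2:ℝ)^(n+1) + 1)/3) else 0 := by
    rw [tsum_eq_single k (fun j hj => by rw [hI j, if_neg hj]; simp)]
    rw [hI k, if_pos rfl, one_mul]
  rw [hL, hI n, hfin, htsum]
  exact scalar_key n k hn
end
end

section
/- Let $\mathcal{F}_m$ be the dyadic $\sigma$-algebras on $(0,1)$, $\mathbb{E}_m$ the associated conditional expectations ($\mathbb{E}_{-1}=0$), and $T f = \sum_{m\text{ even}}(\mathbb{E}_m f - \mathbb{E}_{m-1}f)$. For every dyadic interval $\Delta_m^l = [(l-1)2^{-m}, l\,2^{-m})$ there exists a function $x$ with $x^2 = \chi_{\Delta_m^l}$ (i.e., $x$ is a $\pm 1$-valued sign supported on $\Delta_m^l$) such that $Tx = 0$. -/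
open MeasureTheory Set

noncomputable section

instance : IsFiniteMeasure m01 :=
  ⟨by rw [show m01 = volume.restrict (Ioo 0 1) from rfl, Measure.restrict_apply_univ]
      simp [Real.volume_Ioo]⟩

instance : NullSingletonClass m01 := inferInstanceAs (NullSingletonClass (volume.restrict (Ioo (0:ℝ) 1)))

def xf (p A B : ℕ) : ℝ → ℝ :=
  (Ico ((A:ℝ)/2^p) ((B:ℝ)/2^p)).indicator fun t => (-1:ℝ)^⌊t * 2^p⌋

def sgn (A B c : ℕ) : ℝ := if A ≤ c ∧ c < B then (-1:ℝ)^c else 0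

lemma castdiv (p k : ℕ) (w : ℝ) (hk : k ≤ p) : (w * 2^(p-k))/2^p = w/2^k := by
  rw [div_eq_div_iff (by positivity) (by positivity), mul_assoc, ← pow_add,
    Nat.sub_add_cancel hk]

lemma xf_cell (p A B c : ℕ) {t : ℝ} (h1 : (c:ℝ)/2^p ≤ t) (h2 : t < ((c:ℝ)+1)/2^p) :
    xf p A B t = sgn A B c := by
  have h2p : (0:ℝ) < 2^p := by positivity
  have hc1 : (c:ℝ) ≤ t * 2^p := by rw [div_le_iff₀ h2p] at h1; linarith
  have hc2 : t * 2^p < (c:ℝ) + 1 := by rw [lt_div_iff₀ h2p] at h2; linarith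
  have hfl : ⌊t * 2^p⌋ = (c:ℤ) := by
    rw [Int.floor_eq_iff]
    exact ⟨by exact_mod_cast hc1, by exact_mod_cast hc2⟩
  have hmem : t ∈ Ico ((A:ℝ)/2^p) ((B:ℝ)/2^p) ↔ (A ≤ c ∧ c < B) := by
    constructor
    · rintro ⟨hA, hB⟩
      constructor
      · have h : (A:ℝ) ≤ t * 2^p := by rw [div_le_iff₀ h2p] at hA; linarith
        have h' : (A:ℝ) < (c:ℝ) + 1 := lt_of_le_of_lt h hc2
        have : A < c + 1 := by exact_mod_cast h'
        omega
      · have h : t * 2^p < (B:ℝ) := by rw [lt_div_iff₀ h2p] at hB; linarith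
        exact_mod_cast lt_of_le_of_lt hc1 h
    · rintro ⟨hA, hB⟩
      constructor
      · refine le_trans ?_ h1
        gcongr
      · refine lt_of_lt_of_le h2 ?_
        gcongr
        have h' : c + 1 ≤ B := hB
        exact_mod_cast h'
  unfold xf sgn
  by_cases h : A ≤ c ∧ c < B
  · rw [indicator_of_mem (hmem.mpr h), if_pos h, hfl, zpow_natCast]
  · rw [indicator_of_notMem (fun hm => h (hmem.mp hm)), if_neg h]

lemma xf_meas (p A B : ℕ) : Measurable (xf p A B) := by
  apply Measurable.indicator ?_ measurableSet_Ico
  exact measurable_from_top.comp (Int.measurable_floor.comp (measurable_id.mul_const _))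

lemma xf_bound (p A B : ℕ) (t : ℝ) : ‖xf p A B t‖ ≤ 1 := by
  unfold xf
  by_cases h : t ∈ Ico ((A:ℝ)/2^p) ((B:ℝ)/2^p)
  · rw [indicator_of_mem h, norm_zpow, norm_neg, norm_one, one_zpow]
  · rw [indicator_of_notMem h]; simp

lemma xf_int (p A B : ℕ) : Integrable (xf p A B) m01 :=
  (integrable_const (1:ℝ)).mono' (xf_meas p A B).aestronglyMeasurable
    (Filter.Eventually.of_forall (xf_bound p A B))

lemma intCell (p A B c : ℕ) (hc : c < 2^p) :
    ∫ t in Ico ((c:ℝ)/2^p) (((c:ℝ)+1)/2^p), xf p A B t ∂m01 = sgn A B c / 2^p := by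
  have h2p : (0:ℝ) < 2^p := by positivity
  set S := Ico ((c:ℝ)/2^p) (((c:ℝ)+1)/2^p) with hS
  have hSm : MeasurableSet S := measurableSet_Ico
  have hsub : S ⊆ Ico 0 1 := by
    intro t ht
    constructor
    · exact le_trans (by positivity) ht.1
    · refine lt_of_lt_of_le ht.2 ?_
      rw [div_le_one h2p]
      have : (c:ℝ) + 1 ≤ (2^p : ℕ) := by exact_mod_cast hc
      simpa using this
  have hae : ((S ∩ Ioo 0 1 : Set ℝ)) =ᵐ[volume] (S : Set ℝ) := by
    rw [MeasureTheory.ae_eq_set]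
    constructor
    · rw [diff_eq_empty.mpr inter_subset_left]; simp
    · apply measure_mono_null (?_ : S \ (S ∩ Ioo 0 1) ⊆ {0}) Real.volume_singleton
      intro t ht
      have h01 := hsub ht.1
      have ht2 : t ∉ Ioo 0 1 := fun h => ht.2 ⟨ht.1, h⟩
      simp only [mem_Ioo, not_and, not_lt] at ht2
      have h1 : t < 1 := lt_of_lt_of_le h01.2 le_rfl
      rcases lt_or_ge 0 t with h | h
      · exact absurd h1 (not_lt.mpr (ht2 h))
      · exact le_antisymm h h01.1
  have step1 : ∫ t in S, xf p A B t ∂m01 = ∫ t in S, xf p A B t ∂volume := by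
    rw [show m01 = volume.restrict (Ioo 0 1) from rfl, Measure.restrict_restrict hSm]
    exact setIntegral_congr_set hae
  rw [step1, setIntegral_congr_fun hSm (fun t ht => xf_cell p A B c ht.1 ht.2),
    setIntegral_const, measureReal_def, Real.volume_Ico, smul_eq_mul]
  rw [show (c:ℝ)+1 = ((c:ℝ)+1) from rfl]
  have : ((c:ℝ)+1)/2^p - (c:ℝ)/2^p = 1/2^p := by ring
  rw [this, ENNReal.toReal_ofReal (by positivity)]
  ring

lemma intIco (p A B u : ℕ) : ∀ v, u ≤ v → v ≤ 2^p →
    ∫ t in Ico ((u:ℝ)/2^p) ((v:ℝ)/2^p), xf p A B t ∂m01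
      = (∑ c ∈ Finset.Ico u v, sgn A B c) / 2^p := by
  intro v
  induction v with
  | zero => intro hu _; interval_cases u; simp
  | succ v ih =>
    intro huv hv2
    rcases Nat.lt_or_ge u (v+1) with h | h
    · have huv' : u ≤ v := by omega
      have h2p : (0:ℝ) < 2^p := by positivity
      have hle1 : (u:ℝ)/2^p ≤ (v:ℝ)/2^p := by
        have : (u:ℝ) ≤ (v:ℝ) := by exact_mod_cast huv'
        gcongr
      have hle2 : (v:ℝ)/2^p ≤ ((v:ℝ)+1)/2^p := by
        have : (v:ℝ) ≤ (v:ℝ)+1 := by linarith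
        gcongr
      have hsplit : Ico ((u:ℝ)/2^p) (((v+1:ℕ):ℝ)/2^p)
          = Ico ((u:ℝ)/2^p) ((v:ℝ)/2^p) ∪ Ico ((v:ℝ)/2^p) (((v:ℝ)+1)/2^p) := by
        rw [Ico_union_Ico_eq_Ico hle1 hle2]
        congr 1
        push_cast
        ring_nf
      rw [hsplit, setIntegral_union (Set.Ico_disjoint_Ico_same) measurableSet_Ico
        ((xf_int p A B).integrableOn) ((xf_int p A B).integrableOn),
        ih huv' (by omega), intCell p A B v (by omega), Finset.sum_Ico_succ_top huv']
      ring
    · have : u = v + 1 := by omega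
      subst this
      simp

lemma sumZero (A B u v : ℕ) (hA : Even A) (hB : Even B) (hu : Even u) (hv : Even v) :
    ∑ c ∈ Finset.Ico u v, sgn A B c = 0 := by
  unfold sgn
  rw [← Finset.sum_filter]
  have hfil : (Finset.Ico u v).filter (fun c => A ≤ c ∧ c < B)
      = Finset.Ico (max u A) (min v B) := by
    ext c
    simp only [Finset.mem_filter, Finset.mem_Ico, max_le_iff, lt_min_iff]
    omega
  rw [hfil]
  rcases le_or_gt (max u A) (min v B) with h | h
  · rw [geom_sum_Ico (by norm_num : (-1:ℝ) ≠ 1) h]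
    have h1 : Even (max u A) := by
      rcases max_cases u A with ⟨he, _⟩ | ⟨he, _⟩ <;> rw [he] <;> assumption
    have h2 : Even (min v B) := by
      rcases min_cases v B with ⟨he, _⟩ | ⟨he, _⟩ <;> rw [he] <;> assumption
    rw [h1.neg_one_pow, h2.neg_one_pow]
    norm_num
  · rw [Finset.Ico_eq_empty (by omega), Finset.sum_empty]

lemma dyadic_le (k : ℕ) : dyadicSA k ≤ Real.measurableSpace := by
  apply MeasurableSpace.generateFrom_le
  rintro A ⟨j, _, _, rfl⟩
  exact measurableSet_Ioo

lemma dyadic_pi (k : ℕ) :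
    IsPiSystem {A : Set ℝ | ∃ j : ℕ, 1 ≤ j ∧ j ≤ 2^k ∧ A = Ioo ((j-1 : ℝ)/2^k) ((j:ℝ)/2^k)} := by
  rintro s ⟨j, hj1, hj2, rfl⟩ t ⟨i, hi1, hi2, rfl⟩ hne
  have h2k : (0:ℝ) < 2^k := by positivity
  have hij : j = i := by
    by_contra h
    obtain ⟨u, hu1, hu2⟩ := hne
    simp only [mem_Ioo] at hu1 hu2
    rcases Nat.lt_or_ge j i with hlt | hge
    · have hc : (j:ℝ) ≤ (i:ℝ) - 1 := by
        have : (j:ℝ) + 1 ≤ (i:ℝ) := by exact_mod_cast hlt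
        linarith
      have : (j:ℝ)/2^k ≤ ((i:ℝ)-1)/2^k := by gcongr
      linarith [hu1.2, hu2.1]
    · have hlt' : i < j := by omega
      have hc : (i:ℝ) ≤ (j:ℝ) - 1 := by
        have : (i:ℝ) + 1 ≤ (j:ℝ) := by exact_mod_cast hlt'
        linarith
      have : (i:ℝ)/2^k ≤ ((j:ℝ)-1)/2^k := by gcongr
      linarith [hu2.2, hu1.1]
  subst hij
  rw [inter_self]
  exact ⟨j, hj1, hj2, rfl⟩

lemma intTotal (p A B : ℕ) (hp : 0 < p) (hA : Even A) (hB : Even B) :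
    ∫ t, xf p A B t ∂m01 = 0 := by
  have h2p : (0:ℝ) < 2^p := by positivity
  have hres : m01.restrict (Ico 0 1) = m01 := by
    rw [show m01 = volume.restrict (Ioo 0 1) from rfl,
      Measure.restrict_restrict measurableSet_Ico,
      inter_eq_self_of_subset_right Ioo_subset_Ico_self]
  have key := intIco p A B 0 (2^p) (Nat.zero_le _) le_rfl
  rw [sumZero A B 0 (2^p) hA hB (Even.zero) (by
    exact (Nat.even_pow.mpr ⟨even_two, by omega⟩)), zero_div] at key
  have hcast : ((0:ℕ):ℝ)/2^p = 0 := by norm_num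
  have hcast2 : (((2:ℕ)^p:ℕ):ℝ)/2^p = 1 := by
    push_cast
    field_simp
  rw [hcast, hcast2] at key
  calc ∫ t, xf p A B t ∂m01 = ∫ t in Ico (0:ℝ) 1, xf p A B t ∂m01 := by rw [hres]
    _ = 0 := key

lemma intZero_of_meas (p A B k : ℕ) (hk : k < p) (hA : Even A) (hB : Even B)
    {s : Set ℝ} (hs : MeasurableSet[dyadicSA k] s) :
    ∫ t in s, xf p A B t ∂m01 = 0 := by
  have hp : 0 < p := by omega
  revert s
  intro s hs
  refine MeasurableSpace.induction_on_inter (m := dyadicSA k)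
    (C := fun s _ => ∫ t in s, xf p A B t ∂m01 = 0) (rfl) (dyadic_pi k) (by simp) ?_ ?_ ?_ s hs
  · -- basic sets
    rintro t ⟨j, hj1, hj2, rfl⟩
    have h2k : (0:ℝ) < 2^k := by positivity
    set u := (j-1) * 2^(p-k) with hu
    set v := j * 2^(p-k) with hv
    have hkp : k ≤ p := le_of_lt hk
    have hcu : ((u:ℕ):ℝ)/2^p = ((j:ℝ)-1)/2^k := by
      rw [hu]
      push_cast [Nat.cast_sub hj1]
      rw [castdiv p k _ hkp]
    have hcv : ((v:ℕ):ℝ)/2^p = (j:ℝ)/2^k := by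
      rw [hv]; push_cast; rw [castdiv p k _ hkp]
    have hae : (Ioo (((j:ℝ)-1)/2^k) ((j:ℝ)/2^k) : Set ℝ)
        =ᵐ[m01] (Ico (((j:ℝ)-1)/2^k) ((j:ℝ)/2^k) : Set ℝ) := Ioo_ae_eq_Ico
    have h2e : Even (2^(p-k)) := Nat.even_pow.mpr ⟨even_two, by omega⟩
    have hue : Even u := h2e.mul_left _
    have hve : Even v := h2e.mul_left _
    rw [setIntegral_congr_set hae, ← hcu, ← hcv,
      intIco p A B u v (by rw [hu, hv]; exact Nat.mul_le_mul_right _ (by omega))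
        (by rw [hv]
            calc j * 2^(p-k) ≤ 2^k * 2^(p-k) := Nat.mul_le_mul_right _ hj2
              _ = 2^p := by rw [← pow_add]; congr 1; omega),
      sumZero A B u v hA hB hue hve, zero_div]
  · -- compl
    intro t ht hC
    have ht' : MeasurableSet t := dyadic_le k t ht
    have := integral_add_compl ht' (xf_int p A B)
    rw [hC, zero_add] at this
    rw [this, intTotal p A B hp hA hB]
  · -- union
    intro f hdisj hmeas hC
    rw [integral_iUnion (fun i => dyadic_le k _ (hmeas i)) hdisj
      (xf_int p A B).integrableOn]
    simp [hC]

lemma condE_eq_zero (p A B k : ℕ) (hk : k < p) (hA : Even A) (hB : Even B) :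
    condE k (xf p A B) =ᵐ[m01] 0 := by
  haveI : SigmaFinite (m01.trim (dyadic_le k)) := inferInstance
  refine (ae_eq_condExp_of_forall_setIntegral_eq (dyadic_le k) (xf_int p A B)
    (fun s _ _ => integrableOn_zero) (fun s hs _ => ?_) ?_).symm
  · rw [intZero_of_meas p A B k hk hA hB hs]
    simp
  · exact StronglyMeasurable.aestronglyMeasurable
      (@stronglyMeasurable_zero ℝ ℝ (dyadicSA k) _ _)

lemma Ioo_dyadic_nmem {k i j : ℕ} (hij : i ≠ j) {t : ℝ}
    (h1 : t ∈ Ioo (((j:ℝ)-1)/2^k) ((j:ℝ)/2^k)) :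
    t ∉ Ioo (((i:ℝ)-1)/2^k) ((i:ℝ)/2^k) := by
  intro h2
  have h2k : (0:ℝ) < 2^k := by positivity
  rcases lt_or_gt_of_ne hij with h | h
  · have hc : (i:ℝ) ≤ (j:ℝ) - 1 := by
      have : (i:ℝ) + 1 ≤ (j:ℝ) := by exact_mod_cast h
      linarith
    have : (i:ℝ)/2^k ≤ ((j:ℝ)-1)/2^k := by gcongr
    have := h1.1
    have := h2.2
    linarith
  · have hc : (j:ℝ) ≤ (i:ℝ) - 1 := by
      have : (j:ℝ) + 1 ≤ (i:ℝ) := by exact_mod_cast h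
      linarith
    have : (j:ℝ)/2^k ≤ ((i:ℝ)-1)/2^k := by gcongr
    have := h2.1
    have := h1.2
    linarith

lemma xf_const_on (p A B k j : ℕ) (hpk : p ≤ k) (hj1 : 1 ≤ j) {t : ℝ}
    (ht : t ∈ Ioo (((j:ℝ)-1)/2^k) ((j:ℝ)/2^k)) :
    xf p A B t = sgn A B ((j-1)/2^(k-p)) := by
  have h2k : (0:ℝ) < 2^k := by positivity
  have h2p : (0:ℝ) < 2^p := by positivity
  have h2d : (0:ℕ) < 2^(k-p) := Nat.pow_pos (by norm_num)
  set q := (j-1)/2^(k-p) with hq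
  have hcast : ((j:ℝ)) - 1 = ((j-1:ℕ):ℝ) := by push_cast [Nat.cast_sub hj1]; ring
  apply xf_cell
  · -- (q:ℝ)/2^p ≤ t
    have h1 : q * 2^(k-p) ≤ j - 1 := Nat.div_mul_le_self _ _
    have : ((q:ℝ) * 2^(k-p))/2^k ≤ ((j-1:ℕ):ℝ)/2^k := by
      gcongr
      exact_mod_cast h1
    rw [castdiv k p _ hpk] at this
    refine le_trans this (le_of_lt ?_)
    rw [← hcast]
    exact ht.1
  · -- t < ((q:ℝ)+1)/2^p
    have h2 : j ≤ (q+1) * 2^(k-p) := by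
      have h3 : (j-1) < (q+1) * 2^(k-p) := by
        rw [hq, Nat.add_mul, one_mul]
        exact Nat.lt_div_mul_add h2d
      omega
    have : ((j:ℝ))/2^k ≤ (((q:ℝ)+1) * 2^(k-p))/2^k := by
      gcongr
      exact_mod_cast h2
    rw [castdiv k p _ hpk] at this
    exact lt_of_lt_of_le ht.2 this

lemma xf_ae_eq_g (p A B k : ℕ) (hpk : p ≤ k) :
    xf p A B =ᵐ[m01] fun t => ∑ j ∈ Finset.Icc (1:ℕ) (2^k),
      (Ioo (((j:ℝ)-1)/2^k) ((j:ℝ)/2^k)).indicator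
        (fun _ => sgn A B ((j-1)/2^(k-p))) t := by
  have h2k : (0:ℝ) < 2^k := by positivity
  have hI : ∀ᵐ t ∂m01, t ∈ Ioo (0:ℝ) 1 := ae_restrict_mem measurableSet_Ioo
  have hD : ∀ᵐ t ∂m01, t ∉ Set.range (fun n : ℤ => (n:ℝ)/2^k) := by
    have hc : (Set.range (fun n : ℤ => (n:ℝ)/2^k)).Countable := Set.countable_range _
    exact (measure_eq_zero_iff_ae_notMem (μ := m01)).mp (hc.measure_zero m01)
  filter_upwards [hI, hD] with t ht htD
  have htpos : 0 < t * 2^k := mul_pos ht.1 h2k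
  set f := ⌊t * 2^k⌋ with hf
  have hf0 : 0 ≤ f := Int.floor_nonneg.mpr (le_of_lt htpos)
  have hne : (f:ℝ) ≠ t * 2^k := by
    intro h
    exact htD ⟨f, by rw [div_eq_iff (ne_of_gt h2k)]; exact h⟩
  have hflt : (f:ℝ) < t * 2^k := lt_of_le_of_ne (Int.floor_le _) hne
  have hfub : t * 2^k < (f:ℝ) + 1 := Int.lt_floor_add_one _
  have hfltk : f < ((2^k : ℕ) : ℤ) := by
    have h1 : t * 2^k < 2^k := by nlinarith [ht.2]
    exact Int.floor_lt.mpr (by exact_mod_cast h1)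
  set j := f.toNat + 1 with hj
  have hj1 : 1 ≤ j := by omega
  have hj2 : j ≤ 2^k := by omega
  have hjf : ((j:ℝ)) - 1 = (f:ℝ) := by
    have : (f.toNat : ℤ) = f := Int.toNat_of_nonneg hf0
    push_cast [hj]
    rw [show ((f.toNat:ℝ)) = ((f.toNat : ℤ):ℝ) from by push_cast; ring, this]
    ring
  have htmem : t ∈ Ioo (((j:ℝ)-1)/2^k) ((j:ℝ)/2^k) := by
    constructor
    · rw [hjf, div_lt_iff₀ h2k]; linarith
    · rw [lt_div_iff₀ h2k]
      have : (j:ℝ) = (f:ℝ) + 1 := by rw [← hjf]; ring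
      rw [this]; linarith
  rw [Finset.sum_eq_single_of_mem j (Finset.mem_Icc.mpr ⟨hj1, hj2⟩)]
  · rw [indicator_of_mem htmem]
    exact xf_const_on p A B k j hpk hj1 htmem
  · intro i _ hij
    exact indicator_of_notMem (Ioo_dyadic_nmem hij htmem) _

lemma condE_eq_self (p A B k : ℕ) (hpk : p ≤ k) :
    condE k (xf p A B) =ᵐ[m01] xf p A B := by
  haveI : SigmaFinite (m01.trim (dyadic_le k)) := inferInstance
  set g : ℝ → ℝ := fun t => ∑ j ∈ Finset.Icc (1:ℕ) (2^k),
      (Ioo (((j:ℝ)-1)/2^k) ((j:ℝ)/2^k)).indicator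
        (fun _ => sgn A B ((j-1)/2^(k-p))) t with hg
  have hxg : xf p A B =ᵐ[m01] g := xf_ae_eq_g p A B k hpk
  have hgm : StronglyMeasurable[dyadicSA k] g := by
    apply Finset.stronglyMeasurable_fun_sum
    intro j hj
    simp only [Finset.mem_Icc] at hj
    exact (@stronglyMeasurable_const ℝ ℝ (dyadicSA k) _ _).indicator
      (MeasurableSpace.measurableSet_generateFrom ⟨j, hj.1, hj.2, rfl⟩)
  have hgi : Integrable g m01 := (xf_int p A B).congr hxg
  calc m01[xf p A B | dyadicSA k]
      =ᵐ[m01] m01[g | dyadicSA k] := condExp_congr_ae hxg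
    _ = g := condExp_of_stronglyMeasurable (dyadic_le k) hgm hgi
    _ =ᵐ[m01] xf p A B := hxg.symm


theorem sign_in_kernel_of_Tmart :
    ∀ m l : ℕ, 1 ≤ l → l ≤ 2^m →
      ∃ x : ℝ → ℝ,
        (∀ t, (x t)^2 = indicator (Ico (((l:ℝ) - 1)/2^m) ((l:ℝ)/2^m)) 1 t) ∧
        Tmart x =ᵐ[m01] 0 := by
  intro m l hl1 hl2
  set p := if Even m then m + 1 else m + 2 with hp
  have hpm : m < p := by rw [hp]; split <;> omega
  have hpodd : p % 2 = 1 := by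
    by_cases hm : Even m
    · rw [hp, if_pos hm]
      rw [Nat.even_iff] at hm
      omega
    · rw [hp, if_neg hm]
      rw [Nat.even_iff] at hm
      omega
  set A := (l-1) * 2^(p-m) with hA
  set B := l * 2^(p-m) with hB
  have h2e : Even ((2:ℕ)^(p-m)) := Nat.even_pow.mpr ⟨even_two, by omega⟩
  have hAe : Even A := h2e.mul_left _
  have hBe : Even B := h2e.mul_left _
  have e1 : (A:ℝ)/2^p = ((l:ℝ)-1)/2^m := by
    rw [hA]
    push_cast [Nat.cast_sub hl1]
    rw [castdiv p m _ hpm.le]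
  have e2 : (B:ℝ)/2^p = (l:ℝ)/2^m := by
    rw [hB]
    push_cast
    rw [castdiv p m _ hpm.le]
  have hIco : Ico (((l:ℝ)-1)/2^m) ((l:ℝ)/2^m) = Ico ((A:ℝ)/2^p) ((B:ℝ)/2^p) := by
    rw [e1, e2]
  refine ⟨xf p A B, ?_, ?_⟩
  · intro t
    rw [hIco]
    unfold xf
    by_cases h : t ∈ Ico ((A:ℝ)/2^p) ((B:ℝ)/2^p)
    · rw [indicator_of_mem h, indicator_of_mem h]
      simp only [Pi.one_apply]
      rcases Int.even_or_odd ⌊t * 2^p⌋ with he | ho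
      · rw [he.neg_one_zpow]; norm_num
      · rw [ho.neg_one_zpow]; norm_num
    · rw [indicator_of_notMem h, indicator_of_notMem h]
      norm_num
  · have hterm : ∀ k : ℕ,
        (fun t => if Even k then condE k (xf p A B) t - condEprev k (xf p A B) t else 0)
          =ᵐ[m01] (fun _ => (0:ℝ)) := by
      intro k
      by_cases hk : Even k
      · by_cases hkp : k < p
        · have h1 := condE_eq_zero p A B k hkp hAe hBe
          by_cases hk0 : k = 0
          · subst hk0
            filter_upwards [h1] with t ht1
            simp only [if_pos hk, Pi.zero_apply] at ht1 ⊢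
            rw [ht1, show condEprev 0 (xf p A B) = 0 from if_pos rfl]
            simp
          · have h2 := condE_eq_zero p A B (k-1) (by omega) hAe hBe
            filter_upwards [h1, h2] with t ht1 ht2
            simp only [Pi.zero_apply] at ht1 ht2
            rw [if_pos hk, show condEprev k (xf p A B) = condE (k-1) (xf p A B) from if_neg hk0,
              ht1, ht2]
            simp
        · have hkp' : p ≤ k := le_of_not_gt hkp
          have hkne : k ≠ p := by
            intro h
            rw [Nat.even_iff] at hk
            omega
          have hk0 : k ≠ 0 := by omega
          have h1 := condE_eq_self p A B k hkp'
          have h2 := condE_eq_self p A B (k-1) (by omega)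
          filter_upwards [h1, h2] with t ht1 ht2
          rw [if_pos hk, show condEprev k (xf p A B) = condE (k-1) (xf p A B) from if_neg hk0,
            ht1, ht2, sub_self]
      · exact Filter.Eventually.of_forall (fun t => by simp only []; rw [if_neg hk])
    have hall : ∀ᵐ t ∂m01, ∀ k : ℕ,
        (if Even k then condE k (xf p A B) t - condEprev k (xf p A B) t else 0) = 0 := by
      rw [ae_all_iff]
      exact hterm
    filter_upwards [hall] with t ht
    show Tmart (xf p A B) t = 0
    unfold Tmart
    calc (∑' k : ℕ, if Even k then condE k (xf p A B) t - condEprev k (xf p A B) t else 0)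
        = ∑' _ : ℕ, (0:ℝ) := tsum_congr ht
      _ = 0 := tsum_zero
end
end
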